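/- In the stochastic gradient setting described in the context, the sequence of objective values converges almost surely to the optimal value: the real random sequence (j(h_n)) converges almost surely, and lim_{n → ∞} j(h_n) = j(h*) with probability one. -/

import Mathlib

open MeasureTheory Filter
open scoped RealInnerProductSpace ENNReal NNReal

section Aux

variable {Ω : Type*}

/-- If the integrals of nonneg functions have bounded partial sums, then a.e. the series
of values is summable. -/
lemma aux_ae_summable {mF : MeasurableSpace Ω} {μ : Measure Ω}
    (f : ℕ → Ω → ℝ) (hint : ∀ n, Integrable (f n) μ)
    (h0 : ∀ n ω, 0 ≤ f n ω) (C : ℝ)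
    (hC : ∀ N : ℕ, ∑ k ∈ Finset.range N, ∫ ω, f k ω ∂μ ≤ C) :
    ∀ᵐ ω ∂μ, Summable (fun n => f n ω) := by
  have hsummInt : Summable (fun n => ∫ ω, f n ω ∂μ) := by
    apply summable_of_sum_range_le (fun n => integral_nonneg (h0 n)) hC
  have hmeas : ∀ n, AEMeasurable (fun ω => ENNReal.ofReal (f n ω)) μ :=
    fun n => ENNReal.measurable_ofReal.comp_aemeasurable
      ((hint n).aestronglyMeasurable.aemeasurable)
  have hlin : ∫⁻ ω, (∑' n, ENNReal.ofReal (f n ω)) ∂μ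
      = ∑' n, ∫⁻ ω, ENNReal.ofReal (f n ω) ∂μ := lintegral_tsum hmeas
  have heq : ∀ n, ∫⁻ ω, ENNReal.ofReal (f n ω) ∂μ = ENNReal.ofReal (∫ ω, f n ω ∂μ) := by
    intro n
    rw [← ofReal_integral_eq_lintegral_ofReal (hint n) (ae_of_all _ (h0 n))]
  have hfin : ∫⁻ ω, (∑' n, ENNReal.ofReal (f n ω)) ∂μ < ⊤ := by
    rw [hlin]
    simp_rw [heq]
    rw [← ENNReal.ofReal_tsum_of_nonneg (fun n => integral_nonneg (h0 n)) hsummInt]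
    exact ENNReal.ofReal_lt_top
  filter_upwards [ae_lt_top' (AEMeasurable.ennreal_tsum hmeas) hfin.ne] with ω hω
  have := ENNReal.summable_toReal hω.ne
  refine this.congr (fun n => ?_)
  simp [ENNReal.toReal_ofReal (h0 n ω)]

variable {X : Type*} [NormedAddCommGroup X] [InnerProductSpace ℝ X] [CompleteSpace X]

/-- Pull-out property at the level of integrals: the integral of the inner product of an
integrable function against a bounded `m`-measurable factor can be computed with the
conditional expectation instead. -/
lemma aux_integral_inner_condexp [mF : MeasurableSpace Ω] (μ : Measure Ω)
    [IsProbabilityMeasure μ] {m : MeasurableSpace Ω} (hm : m ≤ mF)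
    {g v : Ω → X} (hg : Integrable g μ) (hv : StronglyMeasurable[m] v)
    {C : ℝ} (hC : 0 ≤ C) (hvb : ∀ ω, ‖v ω‖ ≤ C) :
    ∫ ω, ⟪v ω, g ω⟫ ∂μ = ∫ ω, ⟪v ω, (μ[g|m]) ω⟫ ∂μ := by
  classical
  haveI : SigmaFinite (μ.trim hm) := by infer_instance
  letI _inst : MeasurableSpace Ω := mF
  have hsm : ∀ (s : @SimpleFunc Ω m X), AEStronglyMeasurable (⇑s) μ :=
    fun s => (s.stronglyMeasurable.mono hm).aestronglyMeasurable
  have hint : ∀ (f : Ω → X), Integrable f μ → ∀ (s : @SimpleFunc Ω m X) (Cs : ℝ),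
      (∀ ω, ‖s ω‖ ≤ Cs) → Integrable (fun ω => ⟪s ω, f ω⟫) μ := by
    intro f hf s Cs hCs
    refine Integrable.mono' (hf.norm.const_mul Cs) ?_ (ae_of_all _ fun ω => ?_)
    · exact AEStronglyMeasurable.inner (hsm s) hf.aestronglyMeasurable
    · calc ‖⟪s ω, f ω⟫‖ ≤ ‖s ω‖ * ‖f ω‖ := norm_inner_le_norm _ _
        _ ≤ Cs * ‖f ω‖ := by
          have := norm_nonneg (f ω); nlinarith [hCs ω, norm_nonneg (s ω)]
  -- step A : simple functions
  have hsimple : ∀ s : @SimpleFunc Ω m X,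
      ∫ ω, ⟪s ω, g ω⟫ ∂μ = ∫ ω, ⟪s ω, (μ[g|m]) ω⟫ ∂μ := by
    intro s
    induction s using SimpleFunc.induction with
    | @const c A hA =>
      have hmA : MeasurableSet[mF] A := hm _ hA
      have hcoe : (A.piecewise (Function.const Ω c) (Function.const Ω 0))
          = A.indicator (fun _ => c) := by
        funext ω; by_cases hω : ω ∈ A <;> simp [hω]
      simp only [SimpleFunc.coe_piecewise, SimpleFunc.coe_const, SimpleFunc.coe_zero,
        hcoe]
      have key : ∀ (f : Ω → X), Integrable f μ →
          ∫ ω, ⟪(Set.indicator A (fun _ => c)) ω, f ω⟫ ∂μ = ⟪c, ∫ ω in A, f ω ∂μ⟫ := by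
        intro f hf
        have heq : ∀ ω, ⟪(Set.indicator A (fun _ => c)) ω, f ω⟫
            = Set.indicator A (fun ω => ⟪c, f ω⟫) ω := by
          intro ω
          by_cases hω : ω ∈ A <;> simp [hω]
        simp_rw [heq]
        rw [integral_indicator hmA, integral_inner hf.integrableOn c]
      rw [key g hg, key _ integrable_condExp, setIntegral_condExp hm hg hA]
    | @add s1 s2 hdisj h1 h2 =>
      obtain ⟨C1, hC1⟩ := @SimpleFunc.exists_forall_norm_le Ω X m _ s1
      obtain ⟨C2, hC2⟩ := @SimpleFunc.exists_forall_norm_le Ω X m _ s2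
      have e1 : ∀ (f : Ω → X), (fun ω => ⟪(s1 + s2) ω, f ω⟫)
          = fun ω => ⟪s1 ω, f ω⟫ + ⟪s2 ω, f ω⟫ := by
        intro f; funext ω; simp [inner_add_left]
      rw [e1, e1, integral_add (hint g hg s1 C1 hC1) (hint g hg s2 C2 hC2),
        integral_add (hint _ integrable_condExp s1 C1 hC1) (hint _ integrable_condExp s2 C2 hC2),
        h1, h2]
  -- step B : dominated convergence for approxBounded
  have happrox : ∀ (f : Ω → X), Integrable f μ →
      Tendsto (fun n => ∫ ω, ⟪(hv.approxBounded C n) ω, f ω⟫ ∂μ) atTop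
      (nhds (∫ ω, ⟪v ω, f ω⟫ ∂μ)) := by
    intro f hf
    refine tendsto_integral_of_dominated_convergence (fun ω => C * ‖f ω‖)
      (fun n => AEStronglyMeasurable.inner (hsm _) hf.aestronglyMeasurable)
      (hf.norm.const_mul C) (fun n => ae_of_all _ fun ω => ?_) (ae_of_all _ fun ω => ?_)
    · calc ‖⟪(hv.approxBounded C n) ω, f ω⟫‖ ≤ ‖(hv.approxBounded C n) ω‖ * ‖f ω‖ :=
          norm_inner_le_norm _ _
        _ ≤ C * ‖f ω‖ := by
          have h1 := hv.norm_approxBounded_le hC n ω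
          have := norm_nonneg (f ω); nlinarith
    · exact Tendsto.inner (hv.tendsto_approxBounded_of_norm_le (hvb ω)) tendsto_const_nhds
  have htend1 := happrox g hg
  have htend2 := happrox _ (integrable_condExp (f := g) (m := m))
  have heqn : (fun n => ∫ ω, ⟪(hv.approxBounded C n) ω, g ω⟫ ∂μ)
      = fun n => ∫ ω, ⟪(hv.approxBounded C n) ω, (μ[g|m]) ω⟫ ∂μ := by
    funext n; exact hsimple _
  rw [heqn] at htend1
  exact tendsto_nhds_unique htend1 htend2

end Aux

set_option maxHeartbeats 1000000 in
/-- Almost sure convergence of the objective values of the projected stochastic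
gradient method, in the two-norm setting: under the Robbins–Monro step size rule,
boundedness of `X_ad`, `H`-strong convexity of `j` via the embedding `e : X → H`,
bias bounds `Σ t_n K_n < ∞`, `sup K_n < ∞`, and a uniform conditional second moment
bound on the stochastic gradients, the sequence `(j(h_n))` converges almost surely
and `lim_{n→∞} j(h_n) = j(h*)` with probability one. -/
theorem sgm_objective_values_converge
    {X : Type*} [NormedAddCommGroup X] [InnerProductSpace ℝ X] [CompleteSpace X]
    [TopologicalSpace.SeparableSpace X]
    {H : Type*} [NormedAddCommGroup H] [InnerProductSpace ℝ H] [CompleteSpace H]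
    (e : X →L[ℝ] H)
    (Xad : Set X) (hne : Xad.Nonempty) (hclosed : IsClosed Xad)
    (hconv : Convex ℝ Xad) (hbdd : Bornology.IsBounded Xad)
    (proj : X → X)
    (hproj_mem : ∀ z : X, proj z ∈ Xad)
    (hproj_char : ∀ z : X, ∀ w ∈ Xad, ⟪z - proj z, w - proj z⟫ ≤ 0)
    (j : X → ℝ) (hjconv : ConvexOn ℝ Set.univ j) (hjcont : Continuous j)
    (gradj : X → X) (hdiff : ∀ x : X, HasGradientAt j (gradj x) x)
    (Mgrad : ℝ) (hgradbdd : ∀ x ∈ Xad, ‖gradj x‖ ≤ Mgrad)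
    (cE : ℝ) (hcE : 0 < cE)
    (hstrong : ∀ h₁ ∈ Xad, ∀ h₂ ∈ Xad,
      j h₂ ≥ j h₁ + ⟪gradj h₁, h₂ - h₁⟫ + cE / 2 * ‖e (h₂ - h₁)‖ ^ 2)
    (hstar : X) (hstar_mem : hstar ∈ Xad)
    (hVI : ∀ w ∈ Xad, ⟪gradj hstar, w - hstar⟫ ≥ 0)
    {Ω : Type*} {mF : MeasurableSpace Ω} (μ : Measure Ω) [IsProbabilityMeasure μ]
    (ℱ : Filtration ℕ mF)
    (t : ℕ → ℝ) (ht_nonneg : ∀ n, 0 ≤ t n) (ht_div : ¬ Summable t)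
    (ht_sq : Summable fun n => t n ^ 2)
    (h : ℕ → Ω → X) (g : ℕ → Ω → X) (b : ℕ → Ω → X)
    (h0 : X) (hh0 : h0 ∈ Xad) (hinit : ∀ ω, h 0 ω = h0)
    (hrec : ∀ n ω, h (n + 1) ω = proj (h n ω - t n • g n ω))
    (hg_int : ∀ n, MemLp (g n) 2 μ)
    (hh_meas : ∀ n, StronglyMeasurable[ℱ n] (h n))
    (hb_meas : ∀ n, StronglyMeasurable[ℱ n] (b n))
    (hbias : ∀ n, μ[g n | ℱ n] =ᵐ[μ] fun ω => gradj (h n ω) + b n ω)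
    (K : ℕ → ℝ) (hK : ∀ n, ∀ᵐ ω ∂μ, ‖b n ω‖ ≤ K n)
    (hKsum : Summable fun n => t n * K n) (hKbdd : BddAbove (Set.range K))
    (M : ℝ) (hM : 0 ≤ M)
    (hsecond : ∀ n, μ[(fun ω => ‖g n ω‖ ^ 2) | ℱ n] ≤ᵐ[μ] fun _ => M) :
    ∀ᵐ ω ∂μ, Tendsto (fun n => j (h n ω)) atTop (nhds (j hstar)) := by
  classical
  -- ### basic constants and deterministic facts
  obtain ⟨R₀, hR₀⟩ := hbdd.subset_closedBall 0
  set D : ℝ := 2 * max R₀ 0 with hD_def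
  have hD0 : 0 ≤ D := by positivity
  have hDnorm : ∀ x ∈ Xad, ‖x‖ ≤ max R₀ 0 := fun x hx =>
    le_max_of_le_left (by simpa using hR₀ hx)
  have hD : ∀ x ∈ Xad, ∀ y ∈ Xad, ‖x - y‖ ≤ D := by
    intro x hx y hy
    calc ‖x - y‖ ≤ ‖x‖ + ‖y‖ := norm_sub_le _ _
      _ ≤ D := by have := hDnorm x hx; have := hDnorm y hy; rw [hD_def]; linarith
  set Mg : ℝ := max Mgrad 1 with hMg_def
  have hMg1 : 1 ≤ Mg := le_max_right _ _
  have hMg0 : 0 < Mg := lt_of_lt_of_le one_pos hMg1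
  have hMg : ∀ x ∈ Xad, ‖gradj x‖ ≤ Mg := fun x hx =>
    le_trans (hgradbdd x hx) (le_max_left _ _)
  -- membership of iterates
  have hmem : ∀ n ω, h n ω ∈ Xad := by
    intro n
    induction n with
    | zero => intro ω; rw [hinit ω]; exact hh0
    | succ n _ => intro ω; rw [hrec n ω]; exact hproj_mem _
  -- projection fixes Xad
  have hfix : ∀ z ∈ Xad, proj z = z := by
    intro z hz
    have h1 := hproj_char z z hz
    have h2 : ‖z - proj z‖ ^ 2 ≤ 0 := by
      rw [← real_inner_self_eq_norm_sq]; exact h1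
    have h3 : ‖z - proj z‖ = 0 := by nlinarith [norm_nonneg (z - proj z), sq_nonneg ‖z - proj z‖]
    have := norm_eq_zero.mp h3
    rw [sub_eq_zero] at this
    exact this.symm
  -- projection is nonexpansive
  have hnonexp : ∀ z z' : X, ‖proj z - proj z'‖ ≤ ‖z - z'‖ := by
    intro z z'
    have h1 := hproj_char z (proj z') (hproj_mem z')
    have h2 := hproj_char z' (proj z) (hproj_mem z)
    have key : ‖proj z - proj z'‖ ^ 2 ≤ ⟪z - z', proj z - proj z'⟫ := by
      have e1 : ⟪z - z', proj z - proj z'⟫ = ⟪z - proj z, proj z - proj z'⟫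
          + ⟪proj z - proj z', proj z - proj z'⟫ + ⟪proj z' - z', proj z - proj z'⟫ := by
        rw [← inner_add_left, ← inner_add_left]; congr 1; abel
      have e2 : ⟪z - proj z, proj z - proj z'⟫ = -⟪z - proj z, proj z' - proj z⟫ := by
        rw [← inner_neg_right]; congr 1; abel
      have e3 : ⟪proj z' - z', proj z - proj z'⟫ = -⟪z' - proj z', proj z - proj z'⟫ := by
        rw [← inner_neg_left]; congr 1; abel
      have em : ⟪proj z - proj z', proj z - proj z'⟫ = ‖proj z - proj z'‖ ^ 2 :=
        real_inner_self_eq_norm_sq _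
      linarith [h1, h2, e1, e2, e3, em]
    have h3 : ⟪z - z', proj z - proj z'⟫ ≤ ‖z - z'‖ * ‖proj z - proj z'‖ :=
      real_inner_le_norm _ _
    nlinarith [norm_nonneg (proj z - proj z'), norm_nonneg (z - z'), key, h3]
  -- the gap process
  set d : ℕ → Ω → ℝ := fun n ω => j (h n ω) - j hstar with hd_def
  have hgap_lower : ∀ x ∈ Xad, 0 ≤ j x - j hstar := by
    intro x hx
    have := hstrong hstar hstar_mem x hx
    have h1 := hVI x hx
    nlinarith [sq_nonneg ‖e (x - hstar)‖]
  have hgap_upper : ∀ x ∈ Xad, j x - j hstar ≤ ⟪gradj x, x - hstar⟫ := by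
    intro x hx
    have := hstrong x hx hstar hstar_mem
    have h2 : ⟪gradj x, hstar - x⟫ = -⟪gradj x, x - hstar⟫ := by
      rw [← inner_neg_right]; congr 1; abel
    nlinarith [sq_nonneg ‖e (hstar - x)‖]
  have hd_nonneg : ∀ n ω, 0 ≤ d n ω := fun n ω => hgap_lower _ (hmem n ω)
  have hd_bdd : ∀ n ω, d n ω ≤ Mg * D := by
    intro n ω
    have h1 := hgap_upper _ (hmem n ω)
    have h2 : ⟪gradj (h n ω), h n ω - hstar⟫ ≤ Mg * D := by
      calc ⟪gradj (h n ω), h n ω - hstar⟫ ≤ ‖gradj (h n ω)‖ * ‖h n ω - hstar‖ :=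
            real_inner_le_norm _ _
        _ ≤ Mg * D := by
            have := hMg _ (hmem n ω)
            have := hD _ (hmem n ω) _ hstar_mem
            have := norm_nonneg (gradj (h n ω))
            have := norm_nonneg (h n ω - hstar)
            nlinarith
    have hdd : d n ω = j (h n ω) - j hstar := rfl
    linarith
  -- measurability and integrability of the gap
  have hd_meas : ∀ n, StronglyMeasurable[ℱ n] (d n) := by
    intro n
    exact (hjcont.comp_stronglyMeasurable (hh_meas n)).sub stronglyMeasurable_const
  have hd_meas' : ∀ n, StronglyMeasurable (d n) := fun n => (hd_meas n).mono (ℱ.le n)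
  have hd_int : ∀ n, Integrable (d n) μ := by
    intro n
    refine ⟨(hd_meas' n).aestronglyMeasurable, ?_⟩
    refine HasFiniteIntegral.of_bounded (C := Mg * D) (ae_of_all _ fun ω => ?_)
    rw [Real.norm_eq_abs, abs_of_nonneg (hd_nonneg n ω)]
    exact hd_bdd n ω
  -- one-step objective increment bound
  have hstep : ∀ n ω, d (n + 1) ω ≤ d n ω + Mg * (t n * ‖g n ω‖) := by
    intro n ω
    have hmove : ‖h (n + 1) ω - h n ω‖ ≤ t n * ‖g n ω‖ := by
      rw [hrec n ω]
      calc ‖proj (h n ω - t n • g n ω) - h n ω‖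
          = ‖proj (h n ω - t n • g n ω) - proj (h n ω)‖ := by rw [hfix _ (hmem n ω)]
        _ ≤ ‖(h n ω - t n • g n ω) - h n ω‖ := hnonexp _ _
        _ = t n * ‖g n ω‖ := by
            rw [show (h n ω - t n • g n ω) - h n ω = -(t n • g n ω) by abel]
            rw [norm_neg, norm_smul, Real.norm_eq_abs, abs_of_nonneg (ht_nonneg n)]
    have hcvx : j (h (n + 1) ω) - j (h n ω)
        ≤ ⟪gradj (h (n + 1) ω), h (n + 1) ω - h n ω⟫ := by
      have h5 := hstrong (h (n + 1) ω) (hmem (n + 1) ω) (h n ω) (hmem n ω)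
      have h6 : ⟪gradj (h (n + 1) ω), h n ω - h (n + 1) ω⟫
          = -⟪gradj (h (n + 1) ω), h (n + 1) ω - h n ω⟫ := by
        rw [← inner_neg_right]; congr 1; abel
      nlinarith [sq_nonneg ‖e (h n ω - h (n + 1) ω)‖]
    have hbound : ⟪gradj (h (n + 1) ω), h (n + 1) ω - h n ω⟫ ≤ Mg * (t n * ‖g n ω‖) := by
      calc ⟪gradj (h (n + 1) ω), h (n + 1) ω - h n ω⟫
          ≤ ‖gradj (h (n + 1) ω)‖ * ‖h (n + 1) ω - h n ω‖ := real_inner_le_norm _ _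
        _ ≤ Mg * (t n * ‖g n ω‖) := by
            have h1 := hMg _ (hmem (n + 1) ω)
            have h2 := norm_nonneg (gradj (h (n + 1) ω))
            have h3 := norm_nonneg (h (n + 1) ω - h n ω)
            nlinarith
    simp only [hd_def]
    linarith
  -- pathwise recursion for distances
  have hrecur : ∀ n ω, ‖h (n + 1) ω - hstar‖ ^ 2
      ≤ ‖h n ω - hstar‖ ^ 2 - 2 * t n * ⟪h n ω - hstar, g n ω⟫ + t n ^ 2 * ‖g n ω‖ ^ 2 := by
    intro n ω
    set z := h n ω - t n • g n ω with hz_def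
    rw [hrec n ω]
    have hchar := hproj_char z hstar hstar_mem
    have hexp : ‖z - hstar‖ ^ 2
        = ‖z - proj z‖ ^ 2 + 2 * ⟪z - proj z, proj z - hstar⟫ + ‖proj z - hstar‖ ^ 2 := by
      rw [show z - hstar = (z - proj z) + (proj z - hstar) by abel, norm_add_sq_real]
    have h2 : ⟪z - proj z, proj z - hstar⟫ = -⟪z - proj z, hstar - proj z⟫ := by
      rw [← inner_neg_right]; congr 1; abel
    have hle : ‖proj z - hstar‖ ^ 2 ≤ ‖z - hstar‖ ^ 2 := by
      nlinarith [sq_nonneg ‖z - proj z‖]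
    have hzz : ‖z - hstar‖ ^ 2
        = ‖h n ω - hstar‖ ^ 2 - 2 * t n * ⟪h n ω - hstar, g n ω⟫ + t n ^ 2 * ‖g n ω‖ ^ 2 := by
      rw [show z - hstar = (h n ω - hstar) - t n • g n ω by rw [hz_def]; abel]
      rw [norm_sub_sq_real, real_inner_smul_right, norm_smul]
      rw [Real.norm_eq_abs, mul_pow, sq_abs]
      ring
    linarith
  -- integrability of gradient norms squared
  have hg2_int : ∀ n, Integrable (fun ω => ‖g n ω‖ ^ 2) μ := fun n => (hg_int n).norm.integrable_sq
  have hg1_int : ∀ n, Integrable (g n) μ := fun n => (hg_int n).integrable one_le_two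
  have hEg2 : ∀ n, ∫ ω, ‖g n ω‖ ^ 2 ∂μ ≤ M := by
    intro n
    rw [← integral_condExp (ℱ.le n) (f := fun ω => ‖g n ω‖ ^ 2)]
    calc ∫ ω, (μ[(fun ω => ‖g n ω‖ ^ 2)|ℱ n]) ω ∂μ ≤ ∫ _ω, M ∂μ :=
          integral_mono_ae integrable_condExp (integrable_const M) (hsecond n)
      _ = M := by simp
  -- nonnegativity of K
  have hKnn : ∀ n, 0 ≤ K n := by
    intro n
    obtain ⟨ω, hω⟩ := (hK n).exists
    exact le_trans (norm_nonneg _) hω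
  -- lower bound for the expected inner product (uses the pull-out lemma)
  have hu_meas : ∀ n, StronglyMeasurable[ℱ n] (fun ω => h n ω - hstar) :=
    fun n => (hh_meas n).sub stronglyMeasurable_const
  have hub : ∀ n ω, ‖h n ω - hstar‖ ≤ D := fun n ω => hD _ (hmem n ω) _ hstar_mem
  have hinner_int : ∀ n, Integrable (fun ω => ⟪h n ω - hstar, g n ω⟫) μ := by
    intro n
    refine Integrable.mono' ((hg1_int n).norm.const_mul D)
      (AEStronglyMeasurable.inner ((hu_meas n).mono (ℱ.le n)).aestronglyMeasurable
        (hg1_int n).aestronglyMeasurable) (ae_of_all _ fun ω => ?_)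
    calc ‖⟪h n ω - hstar, g n ω⟫‖ ≤ ‖h n ω - hstar‖ * ‖g n ω‖ := norm_inner_le_norm _ _
      _ ≤ D * ‖g n ω‖ := by
          have := norm_nonneg (g n ω); nlinarith [hub n ω, norm_nonneg (h n ω - hstar)]
  have hpull : ∀ n, ∫ ω, d n ω ∂μ - D * K n ≤ ∫ ω, ⟪h n ω - hstar, g n ω⟫ ∂μ := by
    intro n
    rw [aux_integral_inner_condexp μ (ℱ.le n) (hg1_int n) (hu_meas n) hD0 (hub n)]
    have hψ_int : Integrable (fun ω => ⟪h n ω - hstar, (μ[g n|ℱ n]) ω⟫) μ := by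
      refine Integrable.mono' ((integrable_condExp (f := g n) (m := ℱ n) (μ := μ)).norm.const_mul D)
        (AEStronglyMeasurable.inner ((hu_meas n).mono (ℱ.le n)).aestronglyMeasurable
          integrable_condExp.aestronglyMeasurable) (ae_of_all _ fun ω => ?_)
      calc ‖⟪h n ω - hstar, (μ[g n|ℱ n]) ω⟫‖
          ≤ ‖h n ω - hstar‖ * ‖(μ[g n|ℱ n]) ω‖ := norm_inner_le_norm (𝕜 := ℝ) _ _
        _ ≤ D * ‖(μ[g n|ℱ n]) ω‖ := by
            have := norm_nonneg ((μ[g n|ℱ n]) ω)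
            nlinarith [hub n ω, norm_nonneg (h n ω - hstar)]
    have hmono : ∫ ω, (d n ω - D * K n) ∂μ ≤ ∫ ω, ⟪h n ω - hstar, (μ[g n|ℱ n]) ω⟫ ∂μ := by
      refine integral_mono_ae ((hd_int n).sub (integrable_const (D * K n))) hψ_int ?_
      filter_upwards [hbias n, hK n] with ω hb hk
      rw [hb]
      rw [inner_add_right]
      have e1 : ⟪h n ω - hstar, gradj (h n ω)⟫ = ⟪gradj (h n ω), h n ω - hstar⟫ :=
        real_inner_comm _ _
      have e2 : d n ω ≤ ⟪gradj (h n ω), h n ω - hstar⟫ := hgap_upper _ (hmem n ω)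
      have e3 : |⟪h n ω - hstar, b n ω⟫| ≤ D * K n := by
        calc |⟪h n ω - hstar, b n ω⟫| ≤ ‖h n ω - hstar‖ * ‖b n ω‖ :=
              abs_real_inner_le_norm _ _
          _ ≤ D * K n := mul_le_mul (hub n ω) hk (norm_nonneg _) hD0
      have e4 : -(D * K n) ≤ ⟪h n ω - hstar, b n ω⟫ := neg_le_of_abs_le e3
      linarith
    have heqsub : ∫ ω, (d n ω - D * K n) ∂μ = ∫ ω, d n ω ∂μ - D * K n := by
      rw [integral_sub (hd_int n) (integrable_const _)]
      simp
    linarith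
  -- telescoping: partial sums of t_k E[d_k] are bounded
  set SK : ℝ := ∑' n, t n * K n with hSK_def
  set St2 : ℝ := ∑' n, t n ^ 2 with hSt2_def
  set Ctot : ℝ := D ^ 2 + 2 * D * SK + M * St2 with hCtot_def
  set a : ℕ → Ω → ℝ := fun n ω => ‖h n ω - hstar‖ ^ 2 with ha_def
  have ha_int : ∀ n, Integrable (a n) μ := by
    intro n
    refine ⟨(((continuous_id.sub continuous_const).norm.pow 2).comp_stronglyMeasurable
      ((hh_meas n).mono (ℱ.le n))).aestronglyMeasurable, ?_⟩
    refine HasFiniteIntegral.of_bounded (C := D ^ 2) (ae_of_all _ fun ω => ?_)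
    rw [Real.norm_eq_abs, abs_of_nonneg (sq_nonneg _)]
    have := hub n ω
    have haa : a n ω = ‖h n ω - hstar‖ ^ 2 := rfl
    rw [haa]
    nlinarith [norm_nonneg (h n ω - hstar)]
  have hstep_int : ∀ N : ℕ, ∫ ω, a (N + 1) ω ∂μ
      ≤ ∫ ω, a N ω ∂μ - 2 * t N * (∫ ω, d N ω ∂μ - D * K N) + t N ^ 2 * M := by
    intro N
    have h1 : ∫ ω, a (N + 1) ω ∂μ ≤ ∫ ω, (a N ω - 2 * t N * ⟪h N ω - hstar, g N ω⟫
        + t N ^ 2 * ‖g N ω‖ ^ 2) ∂μ := by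
      refine integral_mono_ae (ha_int (N + 1))
        (((ha_int N).sub ((hinner_int N).const_mul (2 * t N))).add
          ((hg2_int N).const_mul (t N ^ 2))) (ae_of_all _ fun ω => ?_)
      exact hrecur N ω
    have hint1 : Integrable (fun ω => a N ω - 2 * t N * ⟪h N ω - hstar, g N ω⟫) μ :=
      (ha_int N).sub ((hinner_int N).const_mul (2 * t N))
    have hint2 : Integrable (fun ω => t N ^ 2 * ‖g N ω‖ ^ 2) μ :=
      (hg2_int N).const_mul (t N ^ 2)
    have hint3 : Integrable (fun ω => 2 * t N * ⟪h N ω - hstar, g N ω⟫) μ :=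
      (hinner_int N).const_mul (2 * t N)
    have h2 : ∫ ω, (a N ω - 2 * t N * ⟪h N ω - hstar, g N ω⟫
        + t N ^ 2 * ‖g N ω‖ ^ 2) ∂μ
        = ∫ ω, a N ω ∂μ - 2 * t N * ∫ ω, ⟪h N ω - hstar, g N ω⟫ ∂μ
          + t N ^ 2 * ∫ ω, ‖g N ω‖ ^ 2 ∂μ := by
      rw [integral_add hint1 hint2, integral_sub (ha_int N) hint3,
        integral_const_mul, integral_const_mul]
    have h3 : 2 * t N * (∫ ω, d N ω ∂μ - D * K N)
        ≤ 2 * t N * ∫ ω, ⟪h N ω - hstar, g N ω⟫ ∂μ :=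
      mul_le_mul_of_nonneg_left (hpull N) (by linarith [ht_nonneg N])
    have h4 : t N ^ 2 * ∫ ω, ‖g N ω‖ ^ 2 ∂μ ≤ t N ^ 2 * M :=
      mul_le_mul_of_nonneg_left (hEg2 N) (sq_nonneg _)
    linarith
  have hmain : ∀ N : ℕ, ∫ ω, a N ω ∂μ + ∑ k ∈ Finset.range N, 2 * (t k * ∫ ω, d k ω ∂μ)
      ≤ D ^ 2 + ∑ k ∈ Finset.range N, (2 * D * (t k * K k) + M * t k ^ 2) := by
    intro N
    induction N with
    | zero =>
      simp only [Finset.range_zero, Finset.sum_empty, add_zero]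
      have : (a 0) = fun _ω => ‖h0 - hstar‖ ^ 2 := by
        funext ω; simp only [ha_def, hinit ω]
      rw [this, integral_const]
      simp only [probReal_univ, one_smul]
      have hb := hD h0 hh0 hstar hstar_mem
      nlinarith [norm_nonneg (h0 - hstar)]
    | succ N ih =>
      rw [Finset.sum_range_succ, Finset.sum_range_succ]
      have h5 := hstep_int N
      have h6 : 0 ≤ ∫ ω, d N ω ∂μ := integral_nonneg (hd_nonneg N)
      nlinarith [mul_nonneg (ht_nonneg N) (hKnn N)]
  have htel : ∀ N : ℕ, ∑ k ∈ Finset.range N, 2 * (t k * ∫ ω, d k ω ∂μ) ≤ Ctot := by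
    intro N
    have h1 := hmain N
    have h2 : 0 ≤ ∫ ω, a N ω ∂μ := integral_nonneg (fun ω => sq_nonneg _)
    have h3 : ∑ k ∈ Finset.range N, (t k * K k) ≤ SK :=
      Summable.sum_le_tsum _ (fun k _ => mul_nonneg (ht_nonneg k) (hKnn k)) hKsum
    have h4 : ∑ k ∈ Finset.range N, t k ^ 2 ≤ St2 :=
      Summable.sum_le_tsum _ (fun k _ => sq_nonneg _) ht_sq
    have h5 : ∑ k ∈ Finset.range N, (2 * D * (t k * K k) + M * t k ^ 2)
        = 2 * D * ∑ k ∈ Finset.range N, (t k * K k) + M * ∑ k ∈ Finset.range N, t k ^ 2 := by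
      rw [Finset.sum_add_distrib, Finset.mul_sum, Finset.mul_sum]
    rw [hCtot_def]
    have hDM1 : 0 ≤ 2 * D := by linarith
    nlinarith [mul_le_mul_of_nonneg_left h3 hDM1, mul_le_mul_of_nonneg_left h4 hM]
  have hsummEd : Summable (fun k => t k * ∫ ω, d k ω ∂μ) := by
    refine summable_of_sum_range_le
      (fun k => mul_nonneg (ht_nonneg k) (integral_nonneg (hd_nonneg k))) (c := Ctot / 2) ?_
    intro N
    have h1 := htel N
    have h2 : (∑ k ∈ Finset.range N, 2 * (t k * ∫ ω, d k ω ∂μ))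
        = 2 * ∑ k ∈ Finset.range N, (t k * ∫ ω, d k ω ∂μ) := by
      rw [Finset.mul_sum]
    linarith
  -- almost sure summability of t_n d_n
  have hae1 : ∀ᵐ ω ∂μ, Summable (fun n => t n * d n ω) := by
    refine aux_ae_summable _ (fun n => (hd_int n).const_mul (t n))
      (fun n ω => mul_nonneg (ht_nonneg n) (hd_nonneg n ω)) (Ctot / 2) ?_
    intro N
    have h1 := htel N
    have h2 : (∑ k ∈ Finset.range N, 2 * (t k * ∫ ω, d k ω ∂μ))
        = 2 * ∑ k ∈ Finset.range N, (t k * ∫ ω, d k ω ∂μ) := by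
      rw [Finset.mul_sum]
    have h3 : ∀ k, ∫ ω, t k * d k ω ∂μ = t k * ∫ ω, d k ω ∂μ := fun k =>
      integral_const_mul (t k) (d k)
    simp_rw [h3]
    linarith
  -- ### the supermartingale argument, for each positive level ε
  have key3 : ∀ ε : ℝ, 0 < ε →
      ∀ᵐ ω ∂μ, ∃ L, Tendsto (fun n => max (d n ω - ε) 0) atTop (nhds L) := by
    intro ε hε
    have hεne : ε ≠ 0 := ne_of_gt hε
    set W : ℕ → Ω → ℝ := fun n ω => max (d n ω - ε) 0 with hW_def
    set A : ℕ → Set Ω := fun n => {ω | ε / 2 ≤ d n ω} with hA_def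
    set c1 : ℝ := Mg ^ 2 * M + 1 with hc1_def
    set c2 : ℝ := Mg ^ 2 * M / (2 * ε) with hc2_def
    set r : ℕ → Ω → ℝ := fun n ω =>
      (A n).indicator (fun ω => t n / 2 * (Mg ^ 2 * ‖g n ω‖ ^ 2 + 1)) ω
      + (A n)ᶜ.indicator (fun ω => Mg ^ 2 * t n ^ 2 / (2 * ε) * ‖g n ω‖ ^ 2) ω with hr_def
    set β : ℕ → Ω → ℝ := fun n ω =>
      (A n).indicator (fun _ => t n / 2 * c1) ω
      + (A n)ᶜ.indicator (fun _ => c2 * t n ^ 2) ω with hβ_def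
    clear_value W A r β c1 c2 d Mg D St2
    have hc1_nn : 0 ≤ c1 := by
      rw [hc1_def]; nlinarith [sq_nonneg Mg, mul_nonneg (sq_nonneg Mg) hM]
    have hc2_nn : 0 ≤ c2 := by
      rw [hc2_def]
      exact div_nonneg (mul_nonneg (sq_nonneg Mg) hM) (by linarith)
    have hA_meas : ∀ n, MeasurableSet[ℱ n] (A n) := by
      intro n
      rw [hA_def]
      exact measurableSet_le measurable_const (hd_meas n).measurable
    have hA_measF : ∀ n, MeasurableSet (A n) := fun n => (ℱ.le n) _ (hA_meas n)
    have hMgD_nn : 0 ≤ Mg * D := mul_nonneg hMg0.le hD0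
    -- pathwise one-step bound
    have hpath : ∀ n ω, W (n + 1) ω ≤ W n ω + r n ω := by
      intro n ω
      have hx0 : 0 ≤ Mg * (t n * ‖g n ω‖) :=
        mul_nonneg hMg0.le (mul_nonneg (ht_nonneg n) (norm_nonneg _))
      by_cases hel : ω ∈ A n
      · have hr_val : r n ω = t n / 2 * (Mg ^ 2 * ‖g n ω‖ ^ 2 + 1) := by
          simp only [hr_def]
          rw [Set.indicator_of_mem hel, Set.indicator_of_notMem (Set.notMem_compl_iff.mpr hel),
            add_zero]
        rw [hr_val]
        have h1 : W (n + 1) ω ≤ W n ω + Mg * (t n * ‖g n ω‖) := by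
          have hd1 := hstep n ω
          simp only [hW_def]
          rcases le_total (d (n + 1) ω - ε) 0 with hcase | hcase
          · rw [max_eq_right hcase]
            have h9 := le_max_right (d n ω - ε) (0:ℝ)
            linarith
          · rw [max_eq_left hcase]
            have h9 := le_max_left (d n ω - ε) (0:ℝ)
            linarith
        have h2 : Mg * (t n * ‖g n ω‖) ≤ t n / 2 * (Mg ^ 2 * ‖g n ω‖ ^ 2 + 1) := by
          nlinarith [sq_nonneg (Mg * ‖g n ω‖ - 1), ht_nonneg n]
        linarith
      · have hr_val : r n ω = Mg ^ 2 * t n ^ 2 / (2 * ε) * ‖g n ω‖ ^ 2 := by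
          simp only [hr_def]
          rw [Set.indicator_of_notMem hel, Set.indicator_of_mem (Set.mem_compl hel), zero_add]
        rw [hr_val]
        have hdn : d n ω < ε / 2 := by
          have : ¬ (ε / 2 ≤ d n ω) := by
            intro hcon
            refine hel ?_
            simp only [hA_def]
            exact hcon
          linarith [not_le.mp this]
        have hWn : W n ω = 0 := by
          simp only [hW_def]
          exact max_eq_right (by linarith)
        rw [hWn, zero_add]
        have hd1 : d (n + 1) ω - ε ≤ Mg * (t n * ‖g n ω‖) - ε / 2 := by
          have h7 := hstep n ω
          linarith
        have hkey : Mg * (t n * ‖g n ω‖) - ε / 2 ≤ (Mg * (t n * ‖g n ω‖)) ^ 2 / (2 * ε) := by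
          rw [le_div_iff₀ (by linarith : (0:ℝ) < 2 * ε)]
          nlinarith [sq_nonneg (Mg * (t n * ‖g n ω‖) - ε)]
        have hx2 : (Mg * (t n * ‖g n ω‖)) ^ 2 / (2 * ε)
            = Mg ^ 2 * t n ^ 2 / (2 * ε) * ‖g n ω‖ ^ 2 := by ring
        have hnn : (0:ℝ) ≤ (Mg * (t n * ‖g n ω‖)) ^ 2 / (2 * ε) :=
          div_nonneg (sq_nonneg _) (by linarith)
        simp only [hW_def]
        rw [← hx2]
        exact max_le (by linarith) hnn
    -- measurability and integrability
    have hW_meas : ∀ n, StronglyMeasurable[ℱ n] (W n) := by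
      intro n
      rw [hW_def]
      exact ((continuous_id.sub continuous_const).max continuous_const).comp_stronglyMeasurable
        (hd_meas n)
    have hW_nonneg : ∀ n ω, 0 ≤ W n ω := by
      intro n ω; simp only [hW_def]; exact le_max_right _ _
    have hW_le : ∀ n ω, W n ω ≤ Mg * D := by
      intro n ω
      have h1 := hd_bdd n ω
      simp only [hW_def]
      exact max_le (by linarith) hMgD_nn
    have hW_int : ∀ n, Integrable (W n) μ := by
      intro n
      refine ⟨((hW_meas n).mono (ℱ.le n)).aestronglyMeasurable, ?_⟩
      refine HasFiniteIntegral.of_bounded (C := Mg * D) (ae_of_all _ fun ω => ?_)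
      rw [Real.norm_eq_abs, abs_of_nonneg (hW_nonneg n ω)]
      exact hW_le n ω
    have hf1_int : ∀ n, Integrable (fun ω => t n / 2 * (Mg ^ 2 * ‖g n ω‖ ^ 2 + 1)) μ :=
      fun n => (((hg2_int n).const_mul (Mg ^ 2)).add (integrable_const 1)).const_mul (t n / 2)
    have hf2_int : ∀ n, Integrable (fun ω => Mg ^ 2 * t n ^ 2 / (2 * ε) * ‖g n ω‖ ^ 2) μ :=
      fun n => (hg2_int n).const_mul _
    have hr_int : ∀ n, Integrable (r n) μ := by
      intro n
      rw [hr_def]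
      exact ((hf1_int n).indicator (hA_measF n)).add ((hf2_int n).indicator (hA_measF n).compl)
    have hβ_meas : ∀ n, StronglyMeasurable[ℱ n] (β n) := by
      intro n
      rw [hβ_def]
      exact (stronglyMeasurable_const.indicator (hA_meas n)).add
        (stronglyMeasurable_const.indicator (hA_meas n).compl)
    have hβv1_nn : ∀ n, 0 ≤ t n / 2 * c1 :=
      fun n => mul_nonneg (by linarith [ht_nonneg n]) hc1_nn
    have hβv2_nn : ∀ n, 0 ≤ c2 * t n ^ 2 := fun n => mul_nonneg hc2_nn (sq_nonneg _)
    have hβ_cases : ∀ n ω, β n ω = t n / 2 * c1 ∨ β n ω = c2 * t n ^ 2 := by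
      intro n ω
      by_cases hel : ω ∈ A n
      · left
        simp only [hβ_def]
        rw [Set.indicator_of_mem hel, Set.indicator_of_notMem (Set.notMem_compl_iff.mpr hel),
          add_zero]
      · right
        simp only [hβ_def]
        rw [Set.indicator_of_notMem hel, Set.indicator_of_mem (Set.mem_compl hel), zero_add]
    have hβ_nonneg : ∀ n ω, 0 ≤ β n ω := by
      intro n ω
      rcases hβ_cases n ω with hc | hc <;> rw [hc]
      · exact hβv1_nn n
      · exact hβv2_nn n
    have hβ_le : ∀ n ω, β n ω ≤ t n / 2 * c1 + c2 * t n ^ 2 := by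
      intro n ω
      rcases hβ_cases n ω with hc | hc <;> rw [hc]
      · linarith [hβv2_nn n]
      · linarith [hβv1_nn n]
    have hβ_int : ∀ n, Integrable (β n) μ := by
      intro n
      refine ⟨((hβ_meas n).mono (ℱ.le n)).aestronglyMeasurable, ?_⟩
      refine HasFiniteIntegral.of_bounded (C := t n / 2 * c1 + c2 * t n ^ 2)
        (ae_of_all _ fun ω => ?_)
      rw [Real.norm_eq_abs, abs_of_nonneg (hβ_nonneg n ω)]
      exact hβ_le n ω
    -- conditional expectation bound
    have hcond : ∀ n, μ[W (n + 1)|ℱ n] ≤ᵐ[μ] fun ω => W n ω + β n ω := by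
      intro n
      have h1 : μ[W (n + 1)|ℱ n] ≤ᵐ[μ] μ[fun ω => W n ω + r n ω|ℱ n] :=
        condExp_mono (hW_int (n + 1)) ((hW_int n).add (hr_int n)) (ae_of_all _ (hpath n))
      have h2 : μ[fun ω => W n ω + r n ω|ℱ n] =ᵐ[μ] μ[W n|ℱ n] + μ[r n|ℱ n] :=
        condExp_add (hW_int n) (hr_int n) (ℱ n)
      have h3 : μ[W n|ℱ n] = W n :=
        condExp_of_stronglyMeasurable (ℱ.le n) (hW_meas n) (hW_int n)
      have h4 : μ[r n|ℱ n] ≤ᵐ[μ] β n := by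
        have hrsum : r n = (A n).indicator (fun ω => t n / 2 * (Mg ^ 2 * ‖g n ω‖ ^ 2 + 1))
            + (A n)ᶜ.indicator (fun ω => Mg ^ 2 * t n ^ 2 / (2 * ε) * ‖g n ω‖ ^ 2) := by
          funext ω; simp only [hr_def, Pi.add_apply]
        have hsplit : μ[r n|ℱ n] =ᵐ[μ]
            μ[(A n).indicator (fun ω => t n / 2 * (Mg ^ 2 * ‖g n ω‖ ^ 2 + 1))|ℱ n]
            + μ[(A n)ᶜ.indicator (fun ω => Mg ^ 2 * t n ^ 2 / (2 * ε) * ‖g n ω‖ ^ 2)|ℱ n] := by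
          rw [hrsum]
          exact condExp_add ((hf1_int n).indicator (hA_measF n))
            ((hf2_int n).indicator (hA_measF n).compl) (ℱ n)
        have hind1 : μ[(A n).indicator (fun ω => t n / 2 * (Mg ^ 2 * ‖g n ω‖ ^ 2 + 1))|ℱ n]
            =ᵐ[μ] (A n).indicator
              (μ[fun ω => t n / 2 * (Mg ^ 2 * ‖g n ω‖ ^ 2 + 1)|ℱ n]) :=
          condExp_indicator (hf1_int n) (hA_meas n)
        have hind2 : μ[(A n)ᶜ.indicator (fun ω => Mg ^ 2 * t n ^ 2 / (2 * ε) * ‖g n ω‖ ^ 2)|ℱ n]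
            =ᵐ[μ] (A n)ᶜ.indicator
              (μ[fun ω => Mg ^ 2 * t n ^ 2 / (2 * ε) * ‖g n ω‖ ^ 2|ℱ n]) :=
          condExp_indicator (hf2_int n) (hA_meas n).compl
        have hce1 : μ[fun ω => t n / 2 * (Mg ^ 2 * ‖g n ω‖ ^ 2 + 1)|ℱ n]
            ≤ᵐ[μ] fun _ => t n / 2 * c1 := by
          have heqf : (fun ω => t n / 2 * (Mg ^ 2 * ‖g n ω‖ ^ 2 + 1))
              = fun ω => (t n / 2 * Mg ^ 2) * ‖g n ω‖ ^ 2 + t n / 2 := by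
            funext ω; ring
          rw [heqf]
          have hadd : μ[fun ω => (t n / 2 * Mg ^ 2) * ‖g n ω‖ ^ 2 + t n / 2|ℱ n]
              =ᵐ[μ] μ[fun ω => (t n / 2 * Mg ^ 2) * ‖g n ω‖ ^ 2|ℱ n]
                + μ[fun _ => t n / 2|ℱ n] :=
            condExp_add ((hg2_int n).const_mul _) (integrable_const _) (ℱ n)
          have hsmul : μ[fun ω => (t n / 2 * Mg ^ 2) * ‖g n ω‖ ^ 2|ℱ n]
              =ᵐ[μ] fun ω => (t n / 2 * Mg ^ 2) * (μ[fun ω => ‖g n ω‖ ^ 2|ℱ n]) ω := by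
            have hh := condExp_smul (μ := μ) (m := ℱ n) (t n / 2 * Mg ^ 2)
              (fun ω => ‖g n ω‖ ^ 2)
            exact hh
          have hconst : μ[fun _ => t n / 2|ℱ n] = fun _ => t n / 2 :=
            condExp_const (ℱ.le n) _
          filter_upwards [hadd, hsmul, hsecond n] with ω ha' hs' hb'
          rw [ha', Pi.add_apply, hs', hconst]
          have hcc : 0 ≤ t n / 2 * Mg ^ 2 :=
            mul_nonneg (by linarith [ht_nonneg n]) (sq_nonneg _)
          have h8 := mul_le_mul_of_nonneg_left hb' hcc
          rw [hc1_def]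
          nlinarith
        have hce2 : μ[fun ω => Mg ^ 2 * t n ^ 2 / (2 * ε) * ‖g n ω‖ ^ 2|ℱ n]
            ≤ᵐ[μ] fun _ => c2 * t n ^ 2 := by
          have hsmul : μ[fun ω => (Mg ^ 2 * t n ^ 2 / (2 * ε)) * ‖g n ω‖ ^ 2|ℱ n]
              =ᵐ[μ] fun ω => (Mg ^ 2 * t n ^ 2 / (2 * ε)) * (μ[fun ω => ‖g n ω‖ ^ 2|ℱ n]) ω := by
            have hh := condExp_smul (μ := μ) (m := ℱ n) (Mg ^ 2 * t n ^ 2 / (2 * ε))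
              (fun ω => ‖g n ω‖ ^ 2)
            exact hh
          filter_upwards [hsmul, hsecond n] with ω hs' hb'
          rw [hs']
          have hcc : 0 ≤ Mg ^ 2 * t n ^ 2 / (2 * ε) :=
            div_nonneg (mul_nonneg (sq_nonneg _) (sq_nonneg _)) (by linarith)
          have h8 := mul_le_mul_of_nonneg_left hb' hcc
          rw [hc2_def]
          calc Mg ^ 2 * t n ^ 2 / (2 * ε) * (μ[fun ω => ‖g n ω‖ ^ 2|ℱ n]) ω
              ≤ Mg ^ 2 * t n ^ 2 / (2 * ε) * M := h8
            _ = Mg ^ 2 * M / (2 * ε) * t n ^ 2 := by ring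
        filter_upwards [hsplit, hind1, hind2, hce1, hce2] with ω hsp hi1 hi2 hb1 hb2
        rw [hsp, Pi.add_apply, hi1, hi2]
        have hβval : β n ω = (A n).indicator (fun _ => t n / 2 * c1) ω
            + (A n)ᶜ.indicator (fun _ => c2 * t n ^ 2) ω := by simp only [hβ_def]
        rw [hβval]
        refine add_le_add ?_ ?_
        · by_cases hel : ω ∈ A n
          · rw [Set.indicator_of_mem hel, Set.indicator_of_mem hel]; exact hb1
          · rw [Set.indicator_of_notMem hel, Set.indicator_of_notMem hel]
        · by_cases hel : ω ∈ (A n)ᶜ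
          · rw [Set.indicator_of_mem hel, Set.indicator_of_mem hel]; exact hb2
          · rw [Set.indicator_of_notMem hel, Set.indicator_of_notMem hel]
      filter_upwards [h1, h2, h4] with ω h1' h2' h4'
      rw [h2', Pi.add_apply, h3] at h1'
      show (μ[W (n + 1)|ℱ n]) ω ≤ W n ω + β n ω
      linarith
    -- the compensated process is a submartingale
    set B : ℕ → Ω → ℝ := fun n ω => ∑ k ∈ Finset.range n, β k ω with hB_def
    set Y : ℕ → Ω → ℝ := fun n ω => B n ω - W n ω with hY_def
    clear_value B Y
    have hB_meas : ∀ n, StronglyMeasurable[ℱ n] (B n) := by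
      intro n
      rw [hB_def]
      refine Finset.stronglyMeasurable_fun_sum _ (fun k hk => ?_)
      exact (hβ_meas k).mono (ℱ.mono (Finset.mem_range.mp hk).le)
    have hB_meas' : ∀ n, StronglyMeasurable[ℱ n] (B (n + 1)) := by
      intro n
      rw [hB_def]
      refine Finset.stronglyMeasurable_fun_sum _ (fun k hk => ?_)
      exact (hβ_meas k).mono (ℱ.mono (Nat.lt_succ_iff.mp (Finset.mem_range.mp hk)))
    have hB_int : ∀ n, Integrable (B n) μ := by
      intro n
      rw [hB_def]
      exact integrable_finset_sum _ (fun k _ => hβ_int k)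
    have hB_nonneg : ∀ n ω, 0 ≤ B n ω := by
      intro n ω
      rw [hB_def]
      exact Finset.sum_nonneg (fun k _ => hβ_nonneg k ω)
    have hBsucc : ∀ n ω, B (n + 1) ω = B n ω + β n ω := by
      intro n ω
      simp only [hB_def]
      exact Finset.sum_range_succ _ _
    have hYeq : ∀ n, Y n = B n - W n := by
      intro n; funext ω; simp only [hY_def, Pi.sub_apply]
    have hYsub : Submartingale Y ℱ μ := by
      refine submartingale_nat (fun n => by rw [hYeq n]; exact (hB_meas n).sub (hW_meas n))
        (fun n => by rw [hYeq n]; exact (hB_int n).sub (hW_int n)) (fun n => ?_)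
      have hc1' : μ[Y (n + 1)|ℱ n] =ᵐ[μ] fun ω => B (n + 1) ω - (μ[W (n + 1)|ℱ n]) ω := by
        have hs : μ[Y (n + 1)|ℱ n] =ᵐ[μ] μ[B (n + 1)|ℱ n] - μ[W (n + 1)|ℱ n] := by
          rw [hYeq (n + 1)]
          exact condExp_sub (hB_int (n + 1)) (hW_int (n + 1)) (m := ℱ n)
        have hBc : μ[B (n + 1)|ℱ n] = B (n + 1) :=
          condExp_of_stronglyMeasurable (ℱ.le n) (hB_meas' n) (hB_int (n + 1))
        filter_upwards [hs] with ω hs'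
        rw [hs', Pi.sub_apply, hBc]
      filter_upwards [hc1', hcond n] with ω h1' h2'
      rw [h1']
      have hy1 : Y n ω = B n ω - W n ω := by simp only [hY_def]
      rw [hy1]
      have hb1 := hBsucc n ω
      linarith
    -- boundedness in L¹
    have hEβ : ∀ k, ∫ ω, β k ω ∂μ ≤ c1 / ε * (t k * ∫ ω, d k ω ∂μ) + c2 * t k ^ 2 := by
      intro k
      have hcheb : (μ (A k)).toReal * (ε / 2) ≤ ∫ ω, d k ω ∂μ := by
        have h1 : ∫ ω, (A k).indicator (fun _ => ε / 2) ω ∂μ ≤ ∫ ω, d k ω ∂μ := by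
          refine integral_mono_ae ((integrable_const _).indicator (hA_measF k)) (hd_int k)
            (ae_of_all _ fun ω => ?_)
          by_cases hel : ω ∈ A k
          · rw [Set.indicator_of_mem hel]
            have h9 := hel
            simp only [hA_def, Set.mem_setOf_eq] at h9
            exact h9
          · rw [Set.indicator_of_notMem hel]
            exact hd_nonneg k ω
        rw [integral_indicator_const _ (hA_measF k)] at h1
        simpa [smul_eq_mul, measureReal_def] using h1
      have hsplitint : ∫ ω, β k ω ∂μ
          = (μ (A k)).toReal * (t k / 2 * c1) + (μ ((A k)ᶜ)).toReal * (c2 * t k ^ 2) := by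
        have hβsum : ∫ ω, β k ω ∂μ = ∫ ω, ((A k).indicator (fun _ => t k / 2 * c1) ω
            + (A k)ᶜ.indicator (fun _ => c2 * t k ^ 2) ω) ∂μ := by
          congr 1; funext ω; simp only [hβ_def]
        rw [hβsum]
        rw [integral_add ((integrable_const _).indicator (hA_measF k))
          ((integrable_const _).indicator (hA_measF k).compl),
          integral_indicator_const _ (hA_measF k),
          integral_indicator_const _ (hA_measF k).compl]
        simp [smul_eq_mul, measureReal_def]
      rw [hsplitint]
      have hμc : (μ ((A k)ᶜ)).toReal ≤ 1 := by
        have h2 : μ ((A k)ᶜ) ≤ 1 := by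
          simpa using measure_mono (μ := μ) (Set.subset_univ ((A k)ᶜ))
        calc (μ ((A k)ᶜ)).toReal ≤ (1 : ℝ≥0∞).toReal := ENNReal.toReal_mono (by simp) h2
          _ = 1 := by simp
      have htk := ht_nonneg k
      have hμA : 0 ≤ (μ (A k)).toReal := ENNReal.toReal_nonneg
      have hμAc : 0 ≤ (μ ((A k)ᶜ)).toReal := ENNReal.toReal_nonneg
      have h3 : (μ (A k)).toReal * (t k / 2 * c1) ≤ c1 / ε * (t k * ∫ ω, d k ω ∂μ) := by
        have h4 : (μ (A k)).toReal * (ε / 2) * (t k * c1 / ε)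
            ≤ (∫ ω, d k ω ∂μ) * (t k * c1 / ε) :=
          mul_le_mul_of_nonneg_right hcheb
            (div_nonneg (mul_nonneg htk hc1_nn) hε.le)
        calc (μ (A k)).toReal * (t k / 2 * c1)
            = (μ (A k)).toReal * (ε / 2) * (t k * c1 / ε) := by field_simp
          _ ≤ (∫ ω, d k ω ∂μ) * (t k * c1 / ε) := h4
          _ = c1 / ε * (t k * ∫ ω, d k ω ∂μ) := by field_simp
      nlinarith [mul_le_mul_of_nonneg_right hμc (hβv2_nn k)]
    have hsumβ_le : ∀ N : ℕ, ∑ k ∈ Finset.range N, ∫ ω, β k ω ∂μ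
        ≤ c1 / ε * (∑' k, t k * ∫ ω, d k ω ∂μ) + c2 * St2 := by
      intro N
      have h1 : ∑ k ∈ Finset.range N, ∫ ω, β k ω ∂μ
          ≤ ∑ k ∈ Finset.range N, (c1 / ε * (t k * ∫ ω, d k ω ∂μ) + c2 * t k ^ 2) :=
        Finset.sum_le_sum (fun k _ => hEβ k)
      have h2 : ∑ k ∈ Finset.range N, (c1 / ε * (t k * ∫ ω, d k ω ∂μ) + c2 * t k ^ 2)
          = c1 / ε * ∑ k ∈ Finset.range N, (t k * ∫ ω, d k ω ∂μ)
            + c2 * ∑ k ∈ Finset.range N, t k ^ 2 := by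
        rw [Finset.sum_add_distrib, Finset.mul_sum, Finset.mul_sum]
      have h3 : ∑ k ∈ Finset.range N, (t k * ∫ ω, d k ω ∂μ) ≤ ∑' k, t k * ∫ ω, d k ω ∂μ :=
        Summable.sum_le_tsum _ (fun k _ => mul_nonneg (ht_nonneg k) (integral_nonneg (hd_nonneg k)))
          hsummEd
      have h4 : ∑ k ∈ Finset.range N, t k ^ 2 ≤ St2 := by
        rw [hSt2_def]
        exact Summable.sum_le_tsum _ (fun k _ => sq_nonneg _) ht_sq
      have h5 : 0 ≤ c1 / ε := div_nonneg hc1_nn hε.le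
      nlinarith [mul_le_mul_of_nonneg_left h3 h5, mul_le_mul_of_nonneg_left h4 hc2_nn]
    obtain ⟨Cβ, hsumβ_le'⟩ : ∃ C : ℝ, ∀ N : ℕ, ∑ k ∈ Finset.range N, ∫ ω, β k ω ∂μ ≤ C :=
      ⟨_, hsumβ_le⟩
    have hCβ_nn : 0 ≤ Cβ := le_trans (by simp) (hsumβ_le' 0)
    -- uniform L¹ bound for Y
    have hYbdd : ∀ n, eLpNorm (Y n) 1 μ ≤ ENNReal.ofReal (Mg * D + Cβ) := by
      intro n
      rw [eLpNorm_one_eq_lintegral_enorm]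
      have hptw : ∀ ω, (‖Y n ω‖₊ : ℝ≥0∞) ≤ ENNReal.ofReal (Mg * D + B n ω) := by
        intro ω
        rw [← enorm_eq_nnnorm, ← ofReal_norm]
        refine ENNReal.ofReal_le_ofReal ?_
        have hy1 : Y n ω = B n ω - W n ω := by simp only [hY_def]
        rw [hy1, Real.norm_eq_abs, abs_sub_le_iff]
        constructor
        · have := hW_nonneg n ω; have := hB_nonneg n ω; linarith
        · have := hW_le n ω; have := hB_nonneg n ω; linarith
      calc ∫⁻ ω, (‖Y n ω‖₊ : ℝ≥0∞) ∂μ ≤ ∫⁻ ω, ENNReal.ofReal (Mg * D + B n ω) ∂μ :=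
            lintegral_mono hptw
        _ = ENNReal.ofReal (∫ ω, (Mg * D + B n ω) ∂μ) := by
            have hintMB : Integrable (fun ω => Mg * D + B n ω) μ :=
              (integrable_const _).add (hB_int n)
            rw [← ofReal_integral_eq_lintegral_ofReal hintMB
              (ae_of_all _ fun ω => by
                show (0:ℝ) ≤ Mg * D + B n ω
                have := hB_nonneg n ω
                linarith [hMgD_nn])]
        _ ≤ ENNReal.ofReal (Mg * D + Cβ) := by
            refine ENNReal.ofReal_le_ofReal ?_
            rw [integral_add (integrable_const _) (hB_int n), integral_const]
            have hBsum : ∫ ω, B n ω ∂μ = ∑ k ∈ Finset.range n, ∫ ω, β k ω ∂μ := by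
              rw [hB_def]
              exact integral_finset_sum _ (fun k _ => hβ_int k)
            rw [hBsum]
            have h9 := hsumβ_le' n
            simp only [probReal_univ, smul_eq_mul, one_mul]
            linarith
    -- almost sure convergence of Y and of B, hence of W
    have hYconv := hYsub.exists_ae_tendsto_of_bdd
      (R := (Mg * D + Cβ).toNNReal) (fun n => by
        simpa [ENNReal.ofReal] using hYbdd n)
    have hβae : ∀ᵐ ω ∂μ, Summable (fun k => β k ω) :=
      aux_ae_summable β hβ_int hβ_nonneg Cβ hsumβ_le'
    filter_upwards [hYconv, hβae] with ω hY hsummβ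
    obtain ⟨c, hc⟩ := hY
    have hBtend : Tendsto (fun n => B n ω) atTop (nhds (∑' k, β k ω)) := by
      have h1 := hsummβ.hasSum.tendsto_sum_nat
      refine h1.congr (fun n => ?_)
      rw [hB_def]
    refine ⟨∑' k, β k ω - c, ?_⟩
    have hWeq : (fun n => max (d n ω - ε) 0) = fun n => B n ω - Y n ω := by
      funext n
      have hy1 : Y n ω = B n ω - W n ω := by simp only [hY_def]
      have hw1 : W n ω = max (d n ω - ε) 0 := by simp only [hW_def]
      linarith
    rw [hWeq]
    exact hBtend.sub hc
  -- ### pathwise endgame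
  have hae2 : ∀ᵐ ω ∂μ, ∀ q : ℕ, ∃ L,
      Tendsto (fun n => max (d n ω - 1 / (q + 1)) 0) atTop (nhds L) := by
    rw [ae_all_iff]
    intro q
    exact key3 (1 / (q + 1)) (by positivity)
  filter_upwards [hae1, hae2] with ω hsum hW
  -- frequently small
  have hfreq : ∀ δ : ℝ, 0 < δ → ∃ᶠ n in atTop, d n ω < δ := by
    intro δ hδ
    by_contra hcon
    rw [Filter.not_frequently] at hcon
    rw [Filter.eventually_atTop] at hcon
    obtain ⟨N, hN⟩ := hcon
    have : Summable (fun n => t (n + N)) := by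
      have hsum' : Summable (fun n => t (n + N) * d (n + N) ω) := by
        exact ((summable_nat_add_iff N).mpr hsum)
      refine Summable.of_nonneg_of_le (fun n => ht_nonneg _) (fun n => ?_)
        (hsum'.mul_left (1 / δ))
      have hge : δ ≤ d (n + N) ω := not_lt.mp (hN (n + N) (Nat.le_add_left N n))
      have ht := ht_nonneg (n + N)
      have hmul : t (n + N) * δ ≤ t (n + N) * d (n + N) ω :=
        mul_le_mul_of_nonneg_left hge ht
      calc t (n + N) = 1 / δ * (t (n + N) * δ) := by field_simp
        _ ≤ 1 / δ * (t (n + N) * d (n + N) ω) := by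
            apply mul_le_mul_of_nonneg_left hmul; positivity
    exact ht_div ((summable_nat_add_iff N).mp this)
  -- d tends to zero
  have hd0 : Tendsto (fun n => d n ω) atTop (nhds 0) := by
    rw [Metric.tendsto_atTop]
    intro ε' hε'
    obtain ⟨q, hq⟩ : ∃ q : ℕ, 1 / ((q : ℝ) + 1) < ε' / 2 := by
      obtain ⟨q, hq⟩ := exists_nat_one_div_lt (by positivity : (0:ℝ) < ε' / 2)
      exact ⟨q, hq⟩
    obtain ⟨L, hL⟩ := hW q
    set εq : ℝ := 1 / ((q : ℝ) + 1) with hεq_def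
    have hεq_pos : 0 < εq := by positivity
    have hL0 : L = 0 := by
      by_contra hLne
      have hLpos : 0 < L :=
        lt_of_le_of_ne (ge_of_tendsto' hL (fun n => le_max_right _ _)) (Ne.symm hLne)
      have hev : ∀ᶠ n in atTop, L / 2 < max (d n ω - εq) 0 := by
        have := hL.eventually_const_lt (show L / 2 < L by linarith)
        exact this
      have hfr : ∃ᶠ n in atTop, max (d n ω - εq) 0 = 0 := by
        refine (hfreq εq hεq_pos).mono (fun n hn => ?_)
        simp [max_eq_right, sub_nonpos.mpr hn.le]
      obtain ⟨n, hn1, hn2⟩ := (hfr.and_eventually hev).exists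
      rw [hn1] at hn2
      linarith
    rw [hL0] at hL
    have hev2 : ∀ᶠ n in atTop, max (d n ω - εq) 0 < ε' / 2 := by
      have := hL.eventually_lt_const (show (0:ℝ) < ε' / 2 by linarith)
      exact this
    rw [Filter.eventually_atTop] at hev2
    obtain ⟨N, hN⟩ := hev2
    refine ⟨N, fun n hn => ?_⟩
    have h1 := hN n hn
    have h2 : d n ω - εq ≤ max (d n ω - εq) 0 := le_max_left _ _
    rw [Real.dist_eq, sub_zero, abs_of_nonneg (hd_nonneg n ω)]
    linarith
  -- conclude
  have : (fun n => j (h n ω)) = fun n => d n ω + j hstar := by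
    funext n; simp [hd_def]
  rw [this]
  have := hd0.add_const (j hstar)
  simpa using this
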